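/- Weight shifting preserves the code: if Γ is a symmetric matrix over F_m with zero diagonal and Γ' is obtained by multiplying row v and column v of Γ by a nonzero scalar a ∈ F_m, then the additive codes over F_{m^2} generated by Γ + ωI and Γ' + ωI are equivalent under per-coordinate symplectic transformations. -/

import Mathlib

open scoped BigOperators

/-- Action of an element of `Sp_2(F_m)` on a coordinate `F_m × F_m ≅ F_{m^2}`. -/
def sl2Apply {F : Type*} [Field F] (M : Matrix.SpecialLinearGroup (Fin 2) F)
    (x : F × F) : F × F :=
  (M.1 0 0 * x.1 + M.1 0 1 * x.2, M.1 1 0 * x.1 + M.1 1 1 * x.2)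

/-- Weight shifting preserves the code: if `Γ'` is obtained from `Γ` (symmetric, zero
    diagonal, over `F_m`) by multiplying row `v` and column `v` by a nonzero `a ∈ F_m`,
    then the additive codes over `F_{m^2}` generated by `Γ + ωI` and `Γ' + ωI` (i.e. by
    `(Γ|I)` and `(Γ'|I)`) are equivalent under per-coordinate symplectic
    transformations. -/
theorem stmt11 (n : ℕ) (F : Type) [Field F] [Fintype F]
    (v : Fin n) (a : F) (ha : a ≠ 0)
    (Γ Γ' : Matrix (Fin n) (Fin n) F) (hsym : Γ.IsSymm) (hdiag : ∀ i, Γ i i = 0)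
    (hΓ' : ∀ i j, Γ' i j = if i = v ∨ j = v then a * Γ i j else Γ i j) :
    ∃ S : Fin n → Matrix.SpecialLinearGroup (Fin 2) F,
      (fun u : Fin n → F × F => fun i => sl2Apply (S i) (u i)) ''
          {u | ∃ lam : Fin n → F, u = fun i => ((∑ k, lam k * Γ k i : F), lam i)} =
        {u | ∃ lam : Fin n → F, u = fun i => ((∑ k, lam k * Γ' k i : F), lam i)} := by
  classical
  have hdet : (!![a, 0; 0, a⁻¹] : Matrix (Fin 2) (Fin 2) F).det = 1 := by
    simp [Matrix.det_fin_two_of, ha]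
  set M : Matrix.SpecialLinearGroup (Fin 2) F := ⟨_, hdet⟩ with hM
  refine ⟨fun i => if i = v then M else 1, ?_⟩
  -- key computation
  have key : ∀ lam : Fin n → F,
      (fun i => sl2Apply (if i = v then M else 1)
          ((fun i => ((∑ k, lam k * Γ k i : F), lam i)) i))
        = fun i => ((∑ k, Function.update lam v (a⁻¹ * lam v) k * Γ' k i : F),
            Function.update lam v (a⁻¹ * lam v) i) := by
    intro lam
    funext i
    set mu := Function.update lam v (a⁻¹ * lam v) with hmu
    have hsum : ∀ i, (∑ k, mu k * Γ' k i : F)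
        = mu v * Γ' v i + ∑ k ∈ Finset.univ.erase v, lam k * Γ' k i := by
      intro i
      rw [← Finset.add_sum_erase _ _ (Finset.mem_univ v)]
      congr 1
      refine Finset.sum_congr rfl fun k hk => ?_
      rw [hmu, Function.update_of_ne (Finset.ne_of_mem_erase hk)]
    have hsumΓ : (∑ k, lam k * Γ k i : F)
        = lam v * Γ v i + ∑ k ∈ Finset.univ.erase v, lam k * Γ k i := by
      rw [← Finset.add_sum_erase _ _ (Finset.mem_univ v)]
    by_cases hi : i = v
    · subst hi
      simp only [if_pos rfl, sl2Apply, hM, if_true, ↓reduceIte, eq_self_iff_true,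
        Matrix.SpecialLinearGroup.coe_mk, Matrix.cons_val', Matrix.cons_val_zero,
        Matrix.empty_val', Matrix.cons_val_fin_one, Matrix.cons_val_one,
        Matrix.head_cons, Matrix.head_fin_const, Matrix.of_apply]
      rw [hsum i, hmu]
      simp only [Function.update_self]
      have h1 : Γ' i i = 0 := by rw [hΓ' i i, hdiag]; simp
      have h2 : ∀ k, k ≠ i → Γ' k i = a * Γ k i := by
        intro k hk; rw [hΓ' k i]; simp
      rw [h1]
      rw [hsumΓ, hdiag]
      have : ∑ k ∈ Finset.univ.erase i, lam k * Γ' k i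
          = a * ∑ k ∈ Finset.univ.erase i, lam k * Γ k i := by
        rw [Finset.mul_sum]
        refine Finset.sum_congr rfl fun k hk => ?_
        rw [h2 k (Finset.ne_of_mem_erase hk)]; ring
      rw [this]
      simp only [Prod.mk.injEq]
      constructor <;> ring
    · simp only [if_neg hi, sl2Apply]
      simp only [Matrix.SpecialLinearGroup.coe_one, Matrix.one_apply_eq,
        Matrix.one_apply_ne (by decide : (0 : Fin 2) ≠ 1),
        Matrix.one_apply_ne (by decide : (1 : Fin 2) ≠ 0)]
      rw [hsum i, hmu]
      simp only [Function.update_self, Function.update_of_ne hi]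
      have h1 : Γ' v i = a * Γ v i := by rw [hΓ' v i]; simp
      have h2 : ∀ k, k ≠ v → Γ' k i = Γ k i := by
        intro k hk; rw [hΓ' k i, if_neg]; push_neg; exact ⟨hk, hi⟩
      rw [h1, hsumΓ]
      have : ∑ k ∈ Finset.univ.erase v, lam k * Γ' k i
          = ∑ k ∈ Finset.univ.erase v, lam k * Γ k i := by
        refine Finset.sum_congr rfl fun k hk => ?_
        rw [h2 k (Finset.ne_of_mem_erase hk)]
      rw [this]
      simp only [Prod.mk.injEq]
      constructor
      · rw [show a⁻¹ * lam v * (a * Γ v i) = a⁻¹ * a * (lam v * Γ v i) by ring,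
          inv_mul_cancel₀ ha]; ring
      · ring
  ext u
  simp only [Set.mem_image, Set.mem_setOf_eq]
  constructor
  · rintro ⟨_, ⟨lam, rfl⟩, rfl⟩
    exact ⟨Function.update lam v (a⁻¹ * lam v), key lam⟩
  · rintro ⟨lam, rfl⟩
    refine ⟨_, ⟨Function.update lam v (a * lam v), rfl⟩, ?_⟩
    rw [key (Function.update lam v (a * lam v))]
    have : Function.update (Function.update lam v (a * lam v)) v
        (a⁻¹ * Function.update lam v (a * lam v) v) = lam := by
      funext k
      by_cases hk : k = v
      · subst hk
        simp [Function.update_self, ← mul_assoc, inv_mul_cancel₀ ha]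
      · simp [Function.update_of_ne hk]
    rw [this]
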